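/- arXiv:1011.3149 — 3 statements merged into one kernel-verified Lean document; each statement's English description precedes it below -/
import Mathlib

section
/- Let z₀ ∈ ℂ, 0 < R < R′, and let h : ℂ → ℂ be complex-differentiable on the open ball B(z₀, R′). Let λ₁, …, λₙ be pairwise distinct points of the open ball B(z₀, R). Define the n×n complex matrix M by M_{jk} = (h(λ_k) − h(λ_j))/(λ_j − λ_k) for j ≠ k and M_{jj} = −h′(λ_j). Then (1/(2πi)ⁿ) ∮ … ∮ ∏_{j=1}^{n} [h(z_j)/(λ_j − z_j)] · det[(z_k − λ_j)^{−1}]_{j,k=1}^{n} dz_n … dz_1 = det M, where each variable z₁, …, zₙ is integrated once counterclockwise around the circle |z − z₀| = R. -/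
open MeasureTheory

/-- Iterated counterclockwise contour integral over the circle `|z - c| = R`
in each of the `n` variables. -/
noncomputable def iterCircleIntegral : (n : ℕ) → ((Fin n → ℂ) → ℂ) → ℂ → ℝ → ℂ
  | 0, f, _, _ => f Fin.elim0
  | n + 1, f, c, R =>
      circleIntegral (fun z => iterCircleIntegral n (fun w => f (Fin.cons z w)) c R) c R

open Metric Complex Finset

lemma circleIntegral_finset_sum {ι : Type*} (s : Finset ι) (f : ι → ℂ → ℂ) (c : ℂ) (R : ℝ)
    (hf : ∀ i ∈ s, CircleIntegrable (f i) c R) :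
    (circleIntegral (fun z => ∑ i ∈ s, f i z) c R) = ∑ i ∈ s, circleIntegral (f i) c R := by
  simp only [circleIntegral, smul_sum]
  exact intervalIntegral.integral_finset_sum (fun i hi => (hf i hi).out)

lemma iter_sum_prod {S : Type*} [Fintype S] (z₀ : ℂ) (R : ℝ) :
    ∀ (n : ℕ) (c : S → ℂ) (f : S → Fin n → ℂ → ℂ),
    (∀ s i, CircleIntegrable (f s i) z₀ R) →
    iterCircleIntegral n (fun z => ∑ s, c s * ∏ i, f s i (z i)) z₀ R
      = ∑ s, c s * ∏ i, circleIntegral (f s i) z₀ R := by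
  intro n
  induction n with
  | zero => intro c f _; simp [iterCircleIntegral]
  | succ n IH =>
    intro c f hf
    show circleIntegral _ z₀ R = _
    have h1 : (fun z => iterCircleIntegral n
        (fun w => (fun z' : Fin (n+1) → ℂ => ∑ s, c s * ∏ i, f s i (z' i)) (Fin.cons z w)) z₀ R)
        = fun z => ∑ s, (c s * ∏ i, circleIntegral (f s (Fin.succ i)) z₀ R) • f s 0 z := by
      funext z
      have e1 : (fun w : Fin n → ℂ =>
          (fun z' : Fin (n+1) → ℂ => ∑ s, c s * ∏ i, f s i (z' i)) (Fin.cons z w))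
          = fun w => ∑ s, (c s * f s 0 z) * ∏ i, f s (Fin.succ i) (w i) := by
        funext w
        refine Finset.sum_congr rfl fun s _ => ?_
        simp [Fin.prod_univ_succ, mul_assoc]
      rw [e1, IH (fun s => c s * f s 0 z) (fun s i => f s (Fin.succ i)) (fun s i => hf s (Fin.succ i))]
      simp only [smul_eq_mul]
      exact Finset.sum_congr rfl fun s _ => by ring
    rw [h1, circleIntegral_finset_sum _ _ _ _ (fun s _ => ?_)]
    · refine Finset.sum_congr rfl fun s _ => ?_
      rw [circleIntegral.integral_smul]
      simp only [smul_eq_mul, Fin.prod_univ_succ]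
      ring
    · simp only [smul_eq_mul]
      exact (hf s 0).const_mul _

lemma sphere_subset_ball' {z₀ : ℂ} {R R' : ℝ} (hRR' : R < R') :
    sphere z₀ R ⊆ ball z₀ R' :=
  sphere_subset_closedBall.trans (closedBall_subset_ball hRR')

lemma ne_on_sphere {z₀ a z : ℂ} {R : ℝ} (ha : a ∈ ball z₀ R) (hz : z ∈ sphere z₀ R) :
    z ≠ a := by
  rintro rfl
  rw [mem_sphere] at hz
  rw [mem_ball, hz] at ha
  exact lt_irrefl _ ha

lemma integrable_aux {z₀ : ℂ} {R R' : ℝ} (hR : 0 < R) (hRR' : R < R')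
    {h : ℂ → ℂ} (hh : DifferentiableOn ℂ h (Metric.ball z₀ R'))
    {a b : ℂ} (ha : a ∈ ball z₀ R) (hb : b ∈ ball z₀ R) :
    CircleIntegrable (fun z => h z / (a - z) * (z - b)⁻¹) z₀ R := by
  refine ContinuousOn.circleIntegrable hR.le ?_
  have hcont : ContinuousOn h (sphere z₀ R) :=
    (hh.continuousOn).mono (sphere_subset_ball' hRR')
  refine ContinuousOn.mul (ContinuousOn.div hcont
      (continuousOn_const.sub continuousOn_id) ?_)
    ((continuousOn_id.sub continuousOn_const).inv₀ ?_)
  · intro z hz; exact sub_ne_zero.2 (ne_on_sphere ha hz).symm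
  · intro z hz; exact sub_ne_zero.2 (ne_on_sphere hb hz)

lemma diffContOnCl_of_ball {z₀ : ℂ} {R R' : ℝ} (hR : 0 < R) (hRR' : R < R')
    {g : ℂ → ℂ} (hg : DifferentiableOn ℂ g (ball z₀ R')) :
    DiffContOnCl ℂ g (ball z₀ R) := by
  refine ⟨hg.mono (ball_subset_ball hRR'.le), ?_⟩
  rw [closure_ball z₀ hR.ne']
  exact hg.continuousOn.mono (closedBall_subset_ball hRR')

lemma resid_diag {z₀ : ℂ} {R R' : ℝ} (hR : 0 < R) (hRR' : R < R')
    {h : ℂ → ℂ} (hh : DifferentiableOn ℂ h (Metric.ball z₀ R'))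
    {lam : ℂ} (hlam : lam ∈ ball z₀ R) :
    circleIntegral (fun z => h z / (lam - z) * (z - lam)⁻¹) z₀ R
      = (2 * Real.pi * Complex.I) * (-(deriv h lam)) := by
  set g : ℂ → ℂ := dslope h lam with hg_def
  have hlam' : lam ∈ ball z₀ R' := ball_subset_ball hRR'.le hlam
  have hg : DifferentiableOn ℂ g (ball z₀ R') :=
    (differentiableOn_dslope (isOpen_ball.mem_nhds hlam')).2 hh
  -- decomposition on the sphere
  have heq : Set.EqOn (fun z => h z / (lam - z) * (z - lam)⁻¹)
      (fun z => (-1 : ℂ) • ((z - lam)⁻¹ • g z) - (h lam) • ((z - lam)^2)⁻¹)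
      (sphere z₀ R) := by
    intro z hz
    have hne : z ≠ lam := ne_on_sphere hlam hz
    have hzl : z - lam ≠ 0 := sub_ne_zero.2 hne
    have hlz : lam - z ≠ 0 := sub_ne_zero.2 hne.symm
    have hgz : g z = (h z - h lam) / (z - lam) := by
      rw [hg_def, dslope_of_ne _ hne, slope_def_field]
    simp only [smul_eq_mul, hgz]
    field_simp
    ring
  rw [circleIntegral.integral_congr hR.le heq]
  have hint1 : CircleIntegrable (fun z => (-1 : ℂ) • ((z - lam)⁻¹ • g z)) z₀ R := by
    refine ContinuousOn.circleIntegrable hR.le ?_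
    refine (continuousOn_const (c := (-1:ℂ))).smul (ContinuousOn.smul
      ((continuousOn_id.sub continuousOn_const).inv₀ ?_)
      (hg.continuousOn.mono (sphere_subset_ball' hRR')))
    intro z hz; exact sub_ne_zero.2 (ne_on_sphere hlam hz)
  have hint2 : CircleIntegrable (fun z => (h lam) • ((z - lam)^2)⁻¹) z₀ R := by
    refine ContinuousOn.circleIntegrable hR.le ?_
    refine (continuousOn_const (c := h lam)).smul (ContinuousOn.inv₀
      (((continuousOn_id.sub continuousOn_const).pow 2)) ?_)
    intro z hz
    exact pow_ne_zero _ (sub_ne_zero.2 (ne_on_sphere hlam hz))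
  rw [circleIntegral.integral_sub hint1 hint2, circleIntegral.integral_smul,
    circleIntegral.integral_smul]
  have hzero : circleIntegral (fun z => ((z - lam)^2)⁻¹) z₀ R = 0 := by
    refine circleIntegral.integral_eq_zero_of_hasDerivWithinAt hR.le
      (f := fun z => -(z - lam)⁻¹) fun z hz => ?_
    have hzl : z - lam ≠ 0 := sub_ne_zero.2 (ne_on_sphere hlam hz)
    have : HasDerivAt (fun w => -(w - lam)⁻¹) (((z - lam)^2)⁻¹) z := by
      have := (((hasDerivAt_id z).sub_const lam).inv hzl).neg
      convert this using 1 <;> first | rfl | simp [div_eq_mul_inv]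
    exact this.hasDerivWithinAt
  have hcauchy : circleIntegral (fun z => (z - lam)⁻¹ • g z) z₀ R
      = (2 * Real.pi * Complex.I : ℂ) • g lam :=
    (diffContOnCl_of_ball hR hRR' hg).circleIntegral_sub_inv_smul hlam
  rw [hzero, hcauchy, hg_def, dslope_same]
  simp only [smul_eq_mul]
  ring

lemma resid_off {z₀ : ℂ} {R R' : ℝ} (hR : 0 < R) (hRR' : R < R')
    {h : ℂ → ℂ} (hh : DifferentiableOn ℂ h (Metric.ball z₀ R'))
    {lam mu : ℂ} (hlam : lam ∈ ball z₀ R) (hmu : mu ∈ ball z₀ R) (hne : lam ≠ mu) :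
    circleIntegral (fun z => h z / (lam - z) * (z - mu)⁻¹) z₀ R
      = (2 * Real.pi * Complex.I) * ((h mu - h lam) / (lam - mu)) := by
  have hlm : lam - mu ≠ 0 := sub_ne_zero.2 hne
  have heq : Set.EqOn (fun z => h z / (lam - z) * (z - mu)⁻¹)
      (fun z => (lam - mu)⁻¹ • ((z - mu)⁻¹ • h z) - (lam - mu)⁻¹ • ((z - lam)⁻¹ • h z))
      (sphere z₀ R) := by
    intro z hz
    have h1 : z - lam ≠ 0 := sub_ne_zero.2 (ne_on_sphere hlam hz)
    have h2 : z - mu ≠ 0 := sub_ne_zero.2 (ne_on_sphere hmu hz)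
    have h3 : lam - z ≠ 0 := sub_ne_zero.2 (ne_on_sphere hlam hz).symm
    simp only [smul_eq_mul]
    field_simp
    ring
  rw [circleIntegral.integral_congr hR.le heq]
  have hcont : ∀ a ∈ ball z₀ R,
      CircleIntegrable (fun z => (lam - mu)⁻¹ • ((z - a)⁻¹ • h z)) z₀ R := by
    intro a ha
    refine ContinuousOn.circleIntegrable hR.le ?_
    refine (continuousOn_const (c := (lam - mu)⁻¹)).smul (((continuousOn_id.sub continuousOn_const).inv₀ ?_).smul
      ((hh.continuousOn).mono (sphere_subset_ball' hRR')))
    intro z hz; exact sub_ne_zero.2 (ne_on_sphere ha hz)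
  have hd : DiffContOnCl ℂ h (ball z₀ R) := diffContOnCl_of_ball hR hRR' hh
  rw [circleIntegral.integral_sub (hcont mu hmu) (hcont lam hlam),
    circleIntegral.integral_smul, circleIntegral.integral_smul,
    hd.circleIntegral_sub_inv_smul hmu, hd.circleIntegral_sub_inv_smul hlam]
  simp only [smul_eq_mul]
  field_simp

theorem stmt0 (z₀ : ℂ) (R R' : ℝ) (hR : 0 < R) (hRR' : R < R')
    (h : ℂ → ℂ) (hh : DifferentiableOn ℂ h (Metric.ball z₀ R'))
    (n : ℕ) (lam : Fin n → ℂ) (hmem : ∀ j, lam j ∈ Metric.ball z₀ R)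
    (hinj : Function.Injective lam)
    (M : Matrix (Fin n) (Fin n) ℂ)
    (hM : ∀ j k, M j k = if j = k then -(deriv h (lam j))
        else (h (lam k) - h (lam j)) / (lam j - lam k)) :
    (1 / (2 * (Real.pi : ℂ) * Complex.I)) ^ n *
      iterCircleIntegral n (fun z => (∏ j, h (z j) / (lam j - z j)) *
        Matrix.det (Matrix.of fun j k => (z k - lam j)⁻¹)) z₀ R = M.det := by
  classical
  set c2 : ℂ := 2 * Real.pi * Complex.I with hc2
  have hc2ne : c2 ≠ 0 := by
    simp [hc2, Real.pi_ne_zero, Complex.I_ne_zero]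
  set f : Equiv.Perm (Fin n) → Fin n → ℂ → ℂ :=
    fun σ i z => h z / (lam i - z) * (z - lam (σ i))⁻¹ with hf_def
  have hFeq : (fun z : Fin n → ℂ => (∏ j, h (z j) / (lam j - z j)) *
      Matrix.det (Matrix.of fun j k => (z k - lam j)⁻¹))
      = fun z => ∑ σ : Equiv.Perm (Fin n),
          ((Equiv.Perm.sign σ : ℤ) : ℂ) * ∏ i, f σ i (z i) := by
    funext z
    rw [Matrix.det_apply, Finset.mul_sum]
    refine Finset.sum_congr rfl fun σ _ => ?_
    simp only [Units.smul_def, zsmul_eq_mul, Matrix.of_apply]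
    rw [mul_left_comm, ← Finset.prod_mul_distrib]
  rw [hFeq, iter_sum_prod z₀ R n _ f
    (fun σ i => integrable_aux hR hRR' hh (hmem i) (hmem (σ i)))]
  have hval : ∀ σ : Equiv.Perm (Fin n), ∀ i,
      circleIntegral (f σ i) z₀ R = c2 * M i (σ i) := by
    intro σ i
    by_cases hcase : σ i = i
    · rw [hf_def]
      simp only [hcase]
      rw [resid_diag hR hRR' hh (hmem i), hM]
      simp [hc2]
    · rw [hf_def]
      simp only []
      rw [resid_off hR hRR' hh (hmem i) (hmem (σ i))
        (fun hc => hcase (hinj hc).symm), hM]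
      rw [if_neg (fun hc => hcase (Eq.symm hc))]
  rw [Finset.mul_sum]
  have hMdet : M.det = Matrix.det M.transpose := (Matrix.det_transpose M).symm
  rw [hMdet, Matrix.det_apply]
  refine Finset.sum_congr rfl fun σ _ => ?_
  have hprod : ∏ i, circleIntegral (f σ i) z₀ R = c2 ^ n * ∏ i, M i (σ i) := by
    rw [Finset.prod_congr rfl (fun i _ => hval σ i), Finset.prod_mul_distrib,
      Finset.prod_const, Finset.card_univ, Fintype.card_fin]
  rw [hprod]
  simp only [Matrix.transpose_apply, Units.smul_def, zsmul_eq_mul]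
  have hone : ((1 : ℂ) / c2) ^ n * c2 ^ n = 1 := by
    rw [← mul_pow, one_div, inv_mul_cancel₀ hc2ne, one_pow]
  calc (1 / c2) ^ n * (((Equiv.Perm.sign σ : ℤ) : ℂ) * (c2 ^ n * ∏ i, M i (σ i)))
      = ((1 / c2) ^ n * c2 ^ n) * (((Equiv.Perm.sign σ : ℤ) : ℂ) * ∏ i, M i (σ i)) := by
        ring
    _ = ((Equiv.Perm.sign σ : ℤ) : ℂ) * ∏ i, M i (σ i) := by rw [hone, one_mul]
end

section
/- Let U ⊆ ℂ be open, r ∈ U, γ ∈ ℂ, and let s₁, …, s_m and ρ₁, …, ρ_p be complex numbers with ρ_j ≠ r for all j. Let F, ν̃ : U → ℂ be continuous at r, and let ϑ be a complex-valued function on U \ {r} such that (λ − r) ϑ(λ) → ϑ_reg as λ → r, for some ϑ_reg ∈ ℂ. Assume that for all λ in some punctured neighborhood of r contained in U and avoiding the points ρ₁, …, ρ_p, one has 1 + γ ϑ(λ) F(λ) = e^{−2πi ν̃(λ)} · ∏_{j=1}^{m} (λ − s_j) / [(λ − r) · ∏_{j=1}^{p} (λ − ρ_j)]. Then γ ϑ_reg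 F(r) = e^{−2πi ν̃(r)} · ∏_{j=1}^{m} (r − s_j) / ∏_{j=1}^{p} (r − ρ_j). -/
open Filter

theorem stmt6 (U : Set ℂ) (hU : IsOpen U) (r : ℂ) (hr : r ∈ U) (γ : ℂ)
    (m p : ℕ) (s : Fin m → ℂ) (ρ : Fin p → ℂ) (hρ : ∀ j, ρ j ≠ r)
    (F νt : ℂ → ℂ) (hF : ContinuousAt F r) (hν : ContinuousAt νt r)
    (ϑ : ℂ → ℂ) (ϑreg : ℂ)
    (hϑ : Tendsto (fun lam => (lam - r) * ϑ lam) (nhdsWithin r {r}ᶜ) (nhds ϑreg))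
    (heq : ∀ᶠ lam in nhdsWithin r {r}ᶜ, lam ∈ U ∧ (∀ j, lam ≠ ρ j) ∧
      1 + γ * ϑ lam * F lam = Complex.exp (-(2 * (Real.pi : ℂ) * Complex.I) * νt lam) *
        (∏ j, (lam - s j)) / ((lam - r) * ∏ j, (lam - ρ j))) :
    γ * ϑreg * F r = Complex.exp (-(2 * (Real.pi : ℂ) * Complex.I) * νt r) *
      (∏ j, (r - s j)) / ∏ j, (r - ρ j) := by
  set L := nhdsWithin r {r}ᶜ with hL
  have hsub : Tendsto (fun lam : ℂ => lam - r) L (nhds 0) := by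
    have : Tendsto (fun lam : ℂ => lam - r) (nhds r) (nhds (r - r)) :=
      (continuous_id.sub continuous_const).continuousAt
    simpa using this.mono_left nhdsWithin_le_nhds
  have hFf : Tendsto F L (nhds (F r)) := hF.continuousWithinAt
  -- LHS limit
  have h1 : Tendsto (fun lam => (lam - r) * (1 + γ * ϑ lam * F lam)) L
      (nhds (γ * ϑreg * F r)) := by
    have h : Tendsto (fun lam => (lam - r) + γ * ((lam - r) * ϑ lam) * F lam) L
        (nhds (0 + γ * ϑreg * F r)) := hsub.add ((tendsto_const_nhds.mul hϑ).mul hFf)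
    rw [zero_add] at h
    exact h.congr (fun lam => by ring)
  -- RHS limit
  have hprodρ : (∏ j, (r - ρ j)) ≠ 0 :=
    Finset.prod_ne_zero_iff.2 fun j _ => sub_ne_zero.2 fun h => (hρ j) h.symm
  have hc : ContinuousAt (fun lam => Complex.exp (-(2 * (Real.pi : ℂ) * Complex.I) * νt lam) *
      (∏ j, (lam - s j)) / ∏ j, (lam - ρ j)) r := by
    apply ContinuousAt.div
    · exact (Complex.continuous_exp.continuousAt.comp (continuousAt_const.mul hν)).mul
        (Continuous.continuousAt (continuous_finset_prod _ fun j _ =>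
          continuous_id.sub continuous_const))
    · exact Continuous.continuousAt (continuous_finset_prod _ fun j _ =>
        continuous_id.sub continuous_const)
    · exact hprodρ
  have h2 : Tendsto (fun lam => Complex.exp (-(2 * (Real.pi : ℂ) * Complex.I) * νt lam) *
      (∏ j, (lam - s j)) / ∏ j, (lam - ρ j)) L
      (nhds (Complex.exp (-(2 * (Real.pi : ℂ) * Complex.I) * νt r) *
      (∏ j, (r - s j)) / ∏ j, (r - ρ j))) := hc.continuousWithinAt
  -- eventual equality after multiplying by (lam - r)
  have hev : ∀ᶠ lam in L, (lam - r) * (1 + γ * ϑ lam * F lam) =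
      Complex.exp (-(2 * (Real.pi : ℂ) * Complex.I) * νt lam) *
        (∏ j, (lam - s j)) / ∏ j, (lam - ρ j) := by
    filter_upwards [heq, self_mem_nhdsWithin] with lam h hne
    have hne' : lam - r ≠ 0 := sub_ne_zero.2 (by simpa using hne)
    have hprod : (∏ j, (lam - ρ j)) ≠ 0 :=
      Finset.prod_ne_zero_iff.2 fun j _ => sub_ne_zero.2 (h.2.1 j)
    rw [h.2.2]
    field_simp
  have h1' := h1.congr' hev
  exact tendsto_nhds_unique h1' h2
end

section
/- Let T > 0, c > 0, h ∈ ℝ, and K(λ) = 2c/(λ² + c²). Let δ > 0, let ε : ℝ → ℝ be measurable with λ ↦ Log(1 + e^{−ε(λ)/T}) integrable, and let u : ℝ × (−δ, δ) → ℂ satisfy: (i) u(λ, 0) = ε(λ) for all λ; (ii) for every α ∈ (−δ, δ) and every μ ∈ ℝ, the function λ ↦ Log(1 + e^{−u(λ,α)/T}) is integrable and u(μ, α) = μ² − (h + 2πiαT) − (T/2π) ∫_ℝ K(μ − λ) Log(1 + e^{−u(λ,α)/T}) dλ; (iii) for every λ, the function α ↦ u(λ, α) is differentiable at 0 with derivative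 v(λ); (iv) there is an integrable g : ℝ → ℝ with |Log(1 + e^{−u(λ,α)/T}) − Log(1 + e^{−ε(λ)/T})| ≤ |α| g(λ) for all λ and all 0 < |α| < δ. Then, with ϑ(λ) = (1 + e^{ε(λ)/T})^{−1}, one has v(μ) = −2πiT + (1/2π) ∫_ℝ K(μ − λ) ϑ(λ) v(λ) dλ for every μ ∈ ℝ. -/
open MeasureTheory Filter Topology

theorem stmt9 (T c h δ : ℝ) (hT : 0 < T) (hc : 0 < c) (hδ : 0 < δ)
    (K : ℝ → ℝ) (hK : ∀ lam : ℝ, K lam = 2 * c / (lam ^ 2 + c ^ 2))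
    (ε : ℝ → ℝ) (hεm : Measurable ε)
    (hεi : Integrable (fun lam : ℝ => Complex.log (1 + Complex.exp (-(ε lam : ℂ) / (T : ℂ)))))
    (u : ℝ → ℝ → ℂ)  -- u lam α
    (hu0 : ∀ lam : ℝ, u lam 0 = (ε lam : ℂ))
    (hui : ∀ α ∈ Set.Ioo (-δ) δ,
      Integrable (fun lam : ℝ => Complex.log (1 + Complex.exp (-(u lam α) / (T : ℂ)))))
    (hueq : ∀ α ∈ Set.Ioo (-δ) δ, ∀ mu : ℝ,
      u mu α = (mu : ℂ) ^ 2 - ((h : ℂ) + 2 * (Real.pi : ℂ) * Complex.I * (α : ℂ) * (T : ℂ)) -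
        ((T : ℂ) / (2 * (Real.pi : ℂ))) *
          ∫ lam : ℝ, (K (mu - lam) : ℂ) * Complex.log (1 + Complex.exp (-(u lam α) / (T : ℂ))))
    (v : ℝ → ℂ)
    (hv : ∀ lam : ℝ, HasDerivAt (fun α : ℝ => u lam α) (v lam) 0)
    (g : ℝ → ℝ) (hg : Integrable g)
    (hdom : ∀ lam α : ℝ, 0 < |α| → |α| < δ →
      ‖Complex.log (1 + Complex.exp (-(u lam α) / (T : ℂ))) -
        Complex.log (1 + Complex.exp (-(ε lam : ℂ) / (T : ℂ)))‖ ≤ |α| * g lam)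
    (ϑ : ℝ → ℂ) (hϑ : ∀ lam : ℝ, ϑ lam = (1 + Complex.exp ((ε lam : ℂ) / (T : ℂ)))⁻¹) :
    ∀ mu : ℝ, v mu = -2 * (Real.pi : ℂ) * Complex.I * (T : ℂ) +
      (1 / (2 * (Real.pi : ℂ))) * ∫ lam : ℝ, (K (mu - lam) : ℂ) * ϑ lam * v lam := by
  intro mu
  have hT' : (T : ℂ) ≠ 0 := by exact_mod_cast hT.ne'
  have hπ : (Real.pi : ℂ) ≠ 0 := by exact_mod_cast Real.pi_ne_zero
  set L : ℝ → ℝ → ℂ := fun α lam => Complex.log (1 + Complex.exp (-(u lam α) / (T : ℂ)))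
    with hL
  have h0mem : (0 : ℝ) ∈ Set.Ioo (-δ) δ := by constructor <;> simp [hδ, neg_neg] <;> linarith
  -- L 0 equals the ε-expression
  have hL0 : ∀ lam : ℝ, L 0 lam = Complex.log (1 + Complex.exp (-(ε lam : ℂ) / (T : ℂ))) := by
    intro lam; simp [hL, hu0 lam]
  -- positivity facts about 1 + exp(-(ε lam)/T)
  have hexp_real : ∀ lam : ℝ, Complex.exp (-(ε lam : ℂ) / (T : ℂ)) = (Real.exp (-(ε lam) / T) : ℂ) := by
    intro lam; rw [Complex.ofReal_exp]; push_cast; ring_nf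
  have hden_ne : ∀ lam : ℝ, (1 : ℂ) + Complex.exp (-(ε lam : ℂ) / (T : ℂ)) ≠ 0 := by
    intro lam
    rw [hexp_real lam]
    intro hcontr
    have := congrArg Complex.re hcontr
    simp only [Complex.add_re, Complex.one_re, Complex.ofReal_re, Complex.zero_re] at this
    nlinarith [Real.exp_pos (-(ε lam) / T)]
  have hslit : ∀ lam : ℝ, (1 : ℂ) + Complex.exp (-(ε lam : ℂ) / (T : ℂ)) ∈ Complex.slitPlane := by
    intro lam
    rw [hexp_real lam]
    rw [Complex.mem_slitPlane_iff]
    left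
    simp only [Complex.add_re, Complex.one_re, Complex.ofReal_re]
    positivity
  -- pointwise derivative of α ↦ L α lam at 0
  have hLderiv : ∀ lam : ℝ, HasDerivAt (fun α : ℝ => L α lam)
      (-(1 / (T : ℂ)) * ϑ lam * v lam) 0 := by
    intro lam
    have h1 : HasDerivAt (fun z : ℂ => -z / (T : ℂ)) (-(1 / T)) ((ε lam : ℂ)) := by
      simpa [neg_div] using ((hasDerivAt_id ((ε lam : ℂ))).neg).div_const (T : ℂ)
    have h2 : HasDerivAt (fun z : ℂ => Complex.exp (-z / (T : ℂ)))
        (Complex.exp (-(ε lam : ℂ) / (T : ℂ)) * (-(1 / T))) ((ε lam : ℂ)) := h1.cexp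
    have h3 : HasDerivAt (fun z : ℂ => 1 + Complex.exp (-z / (T : ℂ)))
        (Complex.exp (-(ε lam : ℂ) / (T : ℂ)) * (-(1 / T))) ((ε lam : ℂ)) := h2.const_add 1
    have h4 : HasDerivAt Complex.log
        ((1 + Complex.exp (-(ε lam : ℂ) / (T : ℂ)))⁻¹)
        (1 + Complex.exp (-(ε lam : ℂ) / (T : ℂ))) :=
      Complex.hasDerivAt_log (hslit lam)
    have h5 : HasDerivAt (fun z : ℂ => Complex.log (1 + Complex.exp (-z / (T : ℂ))))
        ((1 + Complex.exp (-(ε lam : ℂ) / (T : ℂ)))⁻¹ *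
          (Complex.exp (-(ε lam : ℂ) / (T : ℂ)) * (-(1 / T)))) ((ε lam : ℂ)) := by
      exact h4.comp ((ε lam : ℂ)) h3
    have h6 : HasDerivAt (fun α : ℝ => L α lam)
        ((v lam) • ((1 + Complex.exp (-(ε lam : ℂ) / (T : ℂ)))⁻¹ *
          (Complex.exp (-(ε lam : ℂ) / (T : ℂ)) * (-(1 / T))))) 0 :=
      HasDerivAt.scomp_of_eq (x := (0 : ℝ)) (h := fun α : ℝ => u lam α) h5 (hv lam) (hu0 lam).symm
    convert h6 using 1
    -- identity: v • ((1+E)⁻¹ * (E * (-(1/T)))) = -(1/T) * ϑ * v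
    have hE : Complex.exp (-(ε lam : ℂ) / (T : ℂ)) = (Complex.exp ((ε lam : ℂ) / (T : ℂ)))⁻¹ := by
      rw [← Complex.exp_neg]; ring_nf
    have he_ne : Complex.exp ((ε lam : ℂ) / (T : ℂ)) ≠ 0 := Complex.exp_ne_zero _
    have hden_ne' : (1 : ℂ) + Complex.exp ((ε lam : ℂ) / (T : ℂ)) ≠ 0 := by
      have := hden_ne lam
      rw [hE] at this
      intro hcontr
      apply this
      field_simp
      linear_combination hcontr
    have key : (1 + Complex.exp (-(ε lam : ℂ) / (T : ℂ)))⁻¹ *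
        Complex.exp (-(ε lam : ℂ) / (T : ℂ)) = ϑ lam := by
      rw [hϑ lam, hE]
      have h1e : (1 : ℂ) + (Complex.exp ((ε lam : ℂ) / (T : ℂ)))⁻¹ ≠ 0 := by
        rw [← hE]; exact hden_ne lam
      rw [← mul_inv]
      congr 1
      field_simp
      ring
    rw [smul_eq_mul]
    calc -(1 / (T : ℂ)) * ϑ lam * v lam
        = v lam * (((1 + Complex.exp (-(ε lam : ℂ) / (T : ℂ)))⁻¹ *
            Complex.exp (-(ε lam : ℂ) / (T : ℂ))) * (-(1 / T))) := by rw [key]; ring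
      _ = v lam * ((1 + Complex.exp (-(ε lam : ℂ) / (T : ℂ)))⁻¹ *
            (Complex.exp (-(ε lam : ℂ) / (T : ℂ)) * (-(1 / T)))) := by ring
  -- K is continuous, nonneg and bounded by 2/c
  have hKcont : Continuous fun lam : ℝ => ((K (mu - lam) : ℝ) : ℂ) := by
    have : Continuous fun lam : ℝ => K (mu - lam) := by
      have : (fun lam : ℝ => K (mu - lam)) = fun lam : ℝ => 2 * c / ((mu - lam) ^ 2 + c ^ 2) := by
        funext lam; rw [hK]
      rw [this]
      apply Continuous.div continuous_const
        (((continuous_const.sub continuous_id).pow 2).add continuous_const)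
      intro x; have := pow_pos hc 2; simp only [Pi.add_apply, Pi.pow_apply, Pi.sub_apply, id]; positivity
    exact Complex.continuous_ofReal.comp this
  have hKbdd : ∀ x : ℝ, ‖((K x : ℝ) : ℂ)‖ ≤ 2 / c := by
    intro x
    rw [Complex.norm_real, Real.norm_eq_abs, hK]
    rw [abs_of_nonneg (by positivity)]
    rw [div_le_div_iff₀ (by positivity) hc]
    nlinarith [sq_nonneg x]
  -- integrability of K * L α
  have hKLint : ∀ α ∈ Set.Ioo (-δ) δ,
      Integrable (fun lam : ℝ => ((K (mu - lam) : ℝ) : ℂ) * L α lam) := by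
    intro α hα
    exact (hui α hα).bdd_mul hKcont.aestronglyMeasurable (Filter.Eventually.of_forall fun x => hKbdd _)
  -- the slope identity for α in the punctured interval
  have hslope : ∀ᶠ α in 𝓝[≠] (0 : ℝ),
      slope (fun α : ℝ => u mu α) 0 α =
        -2 * (Real.pi : ℂ) * Complex.I * (T : ℂ) -
          ((T : ℂ) / (2 * (Real.pi : ℂ))) *
            ∫ lam : ℝ, ((K (mu - lam) : ℝ) : ℂ) * (((α : ℂ))⁻¹ * (L α lam - L 0 lam)) := by
    have hIoo : Set.Ioo (-δ) δ ∈ 𝓝[≠] (0 : ℝ) :=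
      nhdsWithin_le_nhds (Ioo_mem_nhds (by linarith) hδ)
    filter_upwards [hIoo, self_mem_nhdsWithin] with α hα hα0
    have hαne : α ≠ 0 := hα0
    have hα0' : (α : ℂ) ≠ 0 := Complex.ofReal_ne_zero.mpr hαne
    have e1 := hueq α hα mu
    have e0 := hueq 0 h0mem mu
    have hsub : u mu α - u mu 0 =
        -(2 * (Real.pi : ℂ) * Complex.I * (α : ℂ) * (T : ℂ)) -
          ((T : ℂ) / (2 * (Real.pi : ℂ))) *
            ((∫ lam : ℝ, ((K (mu - lam) : ℝ) : ℂ) * L α lam) -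
             (∫ lam : ℝ, ((K (mu - lam) : ℝ) : ℂ) * L 0 lam)) := by
      rw [e1, e0]; push_cast; ring
    have hintsub : (∫ lam : ℝ, ((K (mu - lam) : ℝ) : ℂ) * L α lam) -
        (∫ lam : ℝ, ((K (mu - lam) : ℝ) : ℂ) * L 0 lam) =
        ∫ lam : ℝ, ((K (mu - lam) : ℝ) : ℂ) * (L α lam - L 0 lam) := by
      rw [← integral_sub (hKLint α hα) (hKLint 0 h0mem)]
      congr 1; funext lam; ring
    have hpull : ∫ lam : ℝ, ((K (mu - lam) : ℝ) : ℂ) * (((α : ℂ))⁻¹ * (L α lam - L 0 lam)) =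
        ((α : ℂ))⁻¹ * ∫ lam : ℝ, ((K (mu - lam) : ℝ) : ℂ) * (L α lam - L 0 lam) := by
      rw [← integral_const_mul]
      congr 1; funext lam; ring
    rw [slope_def_module, sub_zero]
    have hsm : (α : ℝ)⁻¹ • ((fun α : ℝ => u mu α) α - (fun α : ℝ => u mu α) 0) =
        ((α : ℂ))⁻¹ * (u mu α - u mu 0) := by
      rw [← Complex.ofReal_inv, Complex.real_smul]
    rw [hsm, hsub, hintsub, hpull]
    field_simp
  -- dominated convergence for the integral term
  have hg0 : ∀ lam : ℝ, 0 ≤ g lam := by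
    intro lam
    have := hdom lam (δ / 2) (by rw [abs_of_pos (by linarith)]; linarith)
      (by rw [abs_of_pos (by linarith)]; linarith)
    nlinarith [norm_nonneg (Complex.log (1 + Complex.exp (-(u lam (δ / 2)) / (T : ℂ))) -
      Complex.log (1 + Complex.exp (-(ε lam : ℂ) / (T : ℂ)))), abs_of_pos (show (0:ℝ) < δ/2 by linarith)]
  have htendI : Tendsto
      (fun α : ℝ => ∫ lam : ℝ, ((K (mu - lam) : ℝ) : ℂ) * (((α : ℂ))⁻¹ * (L α lam - L 0 lam)))
      (𝓝[≠] (0 : ℝ))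
      (𝓝 (∫ lam : ℝ, ((K (mu - lam) : ℝ) : ℂ) * (-(1 / (T : ℂ)) * ϑ lam * v lam))) := by
    apply tendsto_integral_filter_of_dominated_convergence (fun lam => (2 / c) * g lam)
    · -- measurability
      have hIoo : Set.Ioo (-δ) δ ∈ 𝓝[≠] (0 : ℝ) :=
        nhdsWithin_le_nhds (Ioo_mem_nhds (by linarith) hδ)
      filter_upwards [hIoo] with α hα
      exact (hKcont.aestronglyMeasurable.mul
        ((((hui α hα).1.sub (hui 0 h0mem).1)).const_mul _))
    · -- bound
      have hIoo : Set.Ioo (-δ) δ ∈ 𝓝[≠] (0 : ℝ) :=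
        nhdsWithin_le_nhds (Ioo_mem_nhds (by linarith) hδ)
      filter_upwards [hIoo, self_mem_nhdsWithin] with α hα hα0
      have hα0' : α ≠ 0 := hα0
      apply Filter.Eventually.of_forall
      intro lam
      have hd := hdom lam α (abs_pos.mpr hα0') (by cases hα; rw [abs_lt]; constructor <;> linarith)
      rw [← hL0 lam] at hd
      have hnormeq : ‖((K (mu - lam) : ℝ) : ℂ) * (((α : ℂ))⁻¹ * (L α lam - L 0 lam))‖ =
          |K (mu - lam)| * (|α|⁻¹ * ‖L α lam - L 0 lam‖) := by
        rw [norm_mul, norm_mul, norm_inv, Complex.norm_real, Complex.norm_real,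
          Real.norm_eq_abs, Real.norm_eq_abs]
      rw [hnormeq]
      have habs : |α| > 0 := abs_pos.mpr hα0'
      calc |K (mu - lam)| * (|α|⁻¹ * ‖L α lam - L 0 lam‖)
          ≤ (2 / c) * (|α|⁻¹ * (|α| * g lam)) := by
            apply mul_le_mul
            · have := hKbdd (mu - lam); rwa [Complex.norm_real, Real.norm_eq_abs] at this
            · exact mul_le_mul_of_nonneg_left hd (by positivity)
            · positivity
            · positivity
        _ = (2 / c) * g lam := by field_simp
    · exact hg.const_mul _
    · apply Filter.Eventually.of_forall
      intro lam
      have := (hasDerivAt_iff_tendsto_slope.mp (hLderiv lam))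
      have h2 : Tendsto (fun α : ℝ => ((α : ℂ))⁻¹ * (L α lam - L 0 lam)) (𝓝[≠] (0:ℝ))
          (𝓝 (-(1 / (T : ℂ)) * ϑ lam * v lam)) := by
        apply this.congr
        intro α
        rw [slope_def_module]
        simp only [sub_zero]
        rw [← Complex.ofReal_inv, Complex.real_smul]
      exact h2.const_mul _
  -- combine
  have hslopetend : Tendsto (slope (fun α : ℝ => u mu α) 0) (𝓝[≠] (0 : ℝ))
      (𝓝 (-2 * (Real.pi : ℂ) * Complex.I * (T : ℂ) -
        ((T : ℂ) / (2 * (Real.pi : ℂ))) *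
          ∫ lam : ℝ, ((K (mu - lam) : ℝ) : ℂ) * (-(1 / (T : ℂ)) * ϑ lam * v lam))) := by
    apply Tendsto.congr' (hslope.mono fun α hα => hα.symm)
    exact (tendsto_const_nhds.sub (htendI.const_mul _))
  have huniq := tendsto_nhds_unique (hasDerivAt_iff_tendsto_slope.mp (hv mu)) hslopetend
  rw [huniq]
  have hrw : ∫ lam : ℝ, ((K (mu - lam) : ℝ) : ℂ) * (-(1 / (T : ℂ)) * ϑ lam * v lam) =
      (-(1 / (T : ℂ))) * ∫ lam : ℝ, ((K (mu - lam) : ℝ) : ℂ) * ϑ lam * v lam := by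
    rw [← integral_const_mul]
    congr 1; funext lam; ring
  rw [hrw]
  field_simp
  ring
end
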